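/- There is a bijection between the set of partitions with zeros λ having first Durfee square of side k and second Durfee square of side l, and the set of triples (λ'', λ⁽¹⁾, λ⁽²⁾) where λ⁽¹⁾ is a partition with at most k parts, λ⁽²⁾ is a partition fitting in an l × (k-l) rectangle, and λ'' is a partition with zeros whose parts are at most l; under this bijection |λ| = |λ⁽¹⁾| + |λ⁽²⁾| + |λ''| + k² + l² and ℓ(λ) = k + l + ℓ(λ''). -/

import Mathlib

/-- The side length of the (first) Durfee square of a partition with zeros,
encoded as a nonincreasing function `f : Fin ℓ → ℕ`. -/
def durfeeSide {ℓ : ℕ} (f : Fin ℓ → ℕ) : ℕ :=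
  (Finset.univ.filter fun i : Fin ℓ => (i : ℕ) < f i).card

/-- The side length of the second Durfee square: the Durfee square side of the rows
below the first Durfee square. -/
def durfeeSide₂ {ℓ : ℕ} (f : Fin ℓ → ℕ) : ℕ :=
  durfeeSide (fun j : Fin (ℓ - durfeeSide f) =>
    f ⟨durfeeSide f + j.1, by have := j.2; omega⟩)

lemma durfee_eq_of {ℓ k : ℕ} (f : Fin ℓ → ℕ) (hk : k ≤ ℓ)
    (h1 : ∀ i : Fin ℓ, i.1 < k → (i : ℕ) < f i)
    (h2 : ∀ i : Fin ℓ, k ≤ i.1 → f i ≤ i.1) :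
    durfeeSide f = k := by
  unfold durfeeSide
  have hset : Finset.univ.filter (fun i : Fin ℓ => (i : ℕ) < f i) =
      (Finset.range k).attachFin
        (fun m hm => lt_of_lt_of_le (Finset.mem_range.mp hm) hk) := by
    ext i
    simp only [Finset.mem_filter, Finset.mem_univ, true_and, Finset.mem_attachFin,
      Finset.mem_range]
    constructor
    · intro h
      by_contra hc
      push_neg at hc
      exact absurd h (not_lt.2 (h2 i hc))
    · exact h1 i
  rw [hset, Finset.card_attachFin, Finset.card_range]

lemma durfee_spec {ℓ k : ℕ} (f : Fin ℓ → ℕ)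
    (hmono : ∀ i j : Fin ℓ, i ≤ j → f j ≤ f i) (hk : durfeeSide f = k) :
    k ≤ ℓ ∧ (∀ i : Fin ℓ, i.1 < k → (i : ℕ) < f i) ∧ (∀ i : Fin ℓ, k ≤ i.1 → f i ≤ i.1) := by
  set S := Finset.univ.filter (fun i : Fin ℓ => (i : ℕ) < f i) with hS
  have hcard : S.card = k := hk
  have hdown : ∀ i j : Fin ℓ, i ≤ j → j ∈ S → i ∈ S := by
    intro i j hij hj
    simp only [hS, Finset.mem_filter, Finset.mem_univ, true_and] at hj ⊢
    calc (i : ℕ) ≤ (j : ℕ) := hij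
    _ < f j := hj
    _ ≤ f i := hmono i j hij
  have hmem : ∀ i : Fin ℓ, i ∈ S → i.1 < k := by
    intro i hi
    have hsub : Finset.Iic i ⊆ S := fun j hj => hdown j i (Finset.mem_Iic.mp hj) hi
    have := Finset.card_le_card hsub
    rw [Fin.card_Iic, hcard] at this
    omega
  have hmem' : ∀ i : Fin ℓ, i.1 < k → i ∈ S := by
    intro i hi
    by_contra hc
    have hsub : S ⊆ Finset.Iio i := by
      intro j hj
      rw [Finset.mem_Iio]
      by_contra hc2
      exact hc (hdown i j (le_of_not_gt hc2) hj)
    have := Finset.card_le_card hsub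
    rw [Fin.card_Iio, hcard] at this
    omega
  refine ⟨?_, ?_, ?_⟩
  · calc k = S.card := hcard.symm
    _ ≤ (Finset.univ : Finset (Fin ℓ)).card := Finset.card_le_card (Finset.subset_univ _)
    _ = ℓ := by simp
  · intro i hi
    have := hmem' i hi
    simpa [hS] using this
  · intro i hi
    have : i ∉ S := fun h => absurd (hmem i h) (by omega)
    simp only [hS, Finset.mem_filter, Finset.mem_univ, true_and, not_lt] at this
    exact this

lemma durfeeSide₂_congr {ℓ k : ℕ} (f : Fin ℓ → ℕ) (hk : durfeeSide f = k) :
    durfeeSide₂ f = durfeeSide (fun j : Fin (ℓ - k) => f ⟨k + j.1, by omega⟩) := by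
  subst hk; rfl

/-- The forward map: rows of the reconstructed partition. -/
def fwdFun (k l : ℕ) (g1 : Fin k → ℕ) (g2 : Fin l → ℕ) {m : ℕ} (h : Fin m → ℕ)
    (i : Fin (k + l + m)) : ℕ :=
  if hi : i.1 < k then k + g1 ⟨i.1, hi⟩
  else if hi2 : i.1 < k + l then l + g2 ⟨i.1 - k, by omega⟩
  else h ⟨i.1 - (k + l), by omega⟩

lemma sigma_fun_ext {m m' : ℕ} (h : m = m') (f : Fin m → ℕ) (g : Fin m' → ℕ)
    (hfg : ∀ i : Fin m, f i = g ⟨i.1, h ▸ i.2⟩) :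
    (⟨m, f⟩ : Σ n : ℕ, Fin n → ℕ) = ⟨m', g⟩ := by
  subst h
  simp only [Sigma.mk.inj_iff, heq_eq_eq, true_and]
  exact funext fun i => by simpa using hfg i

lemma fwd_val1 {k l m : ℕ} (g1 : Fin k → ℕ) (g2 : Fin l → ℕ) (h : Fin m → ℕ) (i : Fin k) :
    fwdFun k l g1 g2 h (Fin.castAdd m (Fin.castAdd l i)) = k + g1 i := by
  unfold fwdFun
  rw [dif_pos (show ((Fin.castAdd m (Fin.castAdd l i)) : ℕ) < k by
    simp only [Fin.coe_castAdd]; exact i.2)]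
  have he : (⟨((Fin.castAdd m (Fin.castAdd l i)) : ℕ), show _ < k by
      simp only [Fin.coe_castAdd]; exact i.2⟩ : Fin k) = i := by
    apply Fin.ext; simp only [Fin.val_mk, Fin.coe_castAdd]
  rw [he]

lemma fwd_val2 {k l m : ℕ} (g1 : Fin k → ℕ) (g2 : Fin l → ℕ) (h : Fin m → ℕ) (j : Fin l) :
    fwdFun k l g1 g2 h (Fin.castAdd m (Fin.natAdd k j)) = l + g2 j := by
  have hj := j.2
  unfold fwdFun
  rw [dif_neg (by simp only [Fin.coe_castAdd, Fin.coe_natAdd]; omega),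
    dif_pos (by simp only [Fin.coe_castAdd, Fin.coe_natAdd]; omega)]
  have he : (⟨((Fin.castAdd m (Fin.natAdd k j)) : ℕ) - k, by
      simp only [Fin.coe_castAdd, Fin.coe_natAdd]; omega⟩ : Fin l) = j := by
    apply Fin.ext
    simp only [Fin.val_mk, Fin.coe_castAdd, Fin.coe_natAdd]
    omega
  rw [he]

lemma fwd_val3 {k l m : ℕ} (g1 : Fin k → ℕ) (g2 : Fin l → ℕ) (h : Fin m → ℕ) (t : Fin m) :
    fwdFun k l g1 g2 h (Fin.natAdd (k + l) t) = h t := by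
  unfold fwdFun
  rw [dif_neg (by simp only [Fin.coe_natAdd]; omega),
    dif_neg (by simp only [Fin.coe_natAdd]; omega)]
  have he : (⟨((Fin.natAdd (k + l) t) : ℕ) - (k + l), by
      simp only [Fin.coe_natAdd]; omega⟩ : Fin m) = t := by
    apply Fin.ext
    simp only [Fin.val_mk, Fin.coe_natAdd]
    omega
  rw [he]

/-- There is a bijection between triples `(λ⁽¹⁾, λ⁽²⁾, λ'')` — where `λ⁽¹⁾` is a partition
with at most `k` parts, `λ⁽²⁾` fits in an `l × (k-l)` rectangle, and `λ''` is a partition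
with zeros whose parts are at most `l` — and partitions with zeros `λ` whose first Durfee
square has side `k` and second Durfee square has side `l`; under the bijection
`|λ| = |λ⁽¹⁾| + |λ⁽²⁾| + |λ''| + k² + l²` and `ℓ(λ) = k + l + ℓ(λ'')`.
(Partitions with at most `k` parts are encoded as nonincreasing `k`-tuples of nonnegative
integers, and partitions with zeros as nonincreasing functions `Fin m → ℕ`.) -/
theorem stmt_9 (k l : ℕ) (hlk : l ≤ k) :
    ∃ e : ({g : Fin k → ℕ // ∀ i j, i ≤ j → g j ≤ g i} ×
           {g : Fin l → ℕ // (∀ i j, i ≤ j → g j ≤ g i) ∧ ∀ i, g i ≤ k - l} ×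
           {p : Σ m : ℕ, Fin m → ℕ //
              (∀ i j, i ≤ j → p.2 j ≤ p.2 i) ∧ ∀ i, p.2 i ≤ l}) ≃
          {p : Σ m : ℕ, Fin m → ℕ //
              (∀ i j, i ≤ j → p.2 j ≤ p.2 i) ∧
              durfeeSide p.2 = k ∧ durfeeSide₂ p.2 = l},
      ∀ x, (∑ i, (e x).1.2 i) =
            (∑ i, x.1.1 i) + (∑ i, x.2.1.1 i) + (∑ i, x.2.2.1.2 i) + k ^ 2 + l ^ 2 ∧
          (e x).1.1 = k + l + x.2.2.1.1 := by
  -- properties of the forward map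
  have fwd_mono : ∀ (g1 : Fin k → ℕ) (g2 : Fin l → ℕ) (m : ℕ) (h : Fin m → ℕ),
      (∀ i j, i ≤ j → g1 j ≤ g1 i) → (∀ i j, i ≤ j → g2 j ≤ g2 i) →
      (∀ i, g2 i ≤ k - l) → (∀ i j, i ≤ j → h j ≤ h i) → (∀ i, h i ≤ l) →
      ∀ i j : Fin (k + l + m), i ≤ j → fwdFun k l g1 g2 h j ≤ fwdFun k l g1 g2 h i := by
    intro g1 g2 m h hg1 hg2 hg2b hh hhb i j hij
    have hij' : (i : ℕ) ≤ (j : ℕ) := hij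
    unfold fwdFun
    split_ifs with h1 h2 h3 h4 h5 h6 h7 h8
    · exact Nat.add_le_add_left (hg1 _ _ (by exact hij')) k
    · omega
    · omega
    · have := hg2b ⟨(j : ℕ) - k, by omega⟩; omega
    · have := hg2 ⟨(i : ℕ) - k, by omega⟩ ⟨(j : ℕ) - k, by omega⟩
        (by simp [Fin.le_def]; omega)
      omega
    · omega
    · have := hhb ⟨(j : ℕ) - (k + l), by omega⟩; omega
    · have := hhb ⟨(j : ℕ) - (k + l), by omega⟩; omega
    · exact hh ⟨(i : ℕ) - (k + l), by omega⟩ ⟨(j : ℕ) - (k + l), by omega⟩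
        (by simp [Fin.le_def]; omega)
  have fwd_d1 : ∀ (g1 : Fin k → ℕ) (g2 : Fin l → ℕ) (m : ℕ) (h : Fin m → ℕ),
      (∀ i, g2 i ≤ k - l) → (∀ i, h i ≤ l) →
      durfeeSide (fwdFun k l g1 g2 h) = k := by
    intro g1 g2 m h hg2b hhb
    apply durfee_eq_of _ (by omega)
    · intro i hi
      unfold fwdFun
      rw [dif_pos hi]
      omega
    · intro i hi
      unfold fwdFun
      rw [dif_neg (by omega)]
      split_ifs with h2
      · have := hg2b ⟨(i : ℕ) - k, by omega⟩; omega
      · have := hhb ⟨(i : ℕ) - (k + l), by omega⟩; omega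
  have fwd_d2 : ∀ (g1 : Fin k → ℕ) (g2 : Fin l → ℕ) (m : ℕ) (h : Fin m → ℕ),
      (∀ i, g2 i ≤ k - l) → (∀ i, h i ≤ l) →
      durfeeSide₂ (fwdFun k l g1 g2 h) = l := by
    intro g1 g2 m h hg2b hhb
    rw [durfeeSide₂_congr _ (fwd_d1 g1 g2 m h hg2b hhb)]
    apply durfee_eq_of _ (by omega)
    · intro j hj
      unfold fwdFun
      rw [dif_neg (by simp only [Fin.val_mk]; omega), dif_pos (by simp only [Fin.val_mk]; omega)]
      omega
    · intro j hj
      unfold fwdFun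
      rw [dif_neg (by simp only [Fin.val_mk]; omega), dif_neg (by simp only [Fin.val_mk]; omega)]
      have := hhb ⟨k + (j : ℕ) - (k + l), by omega⟩
      simp only [Fin.val_mk]
      omega
  -- the forward map
  let toF : ({g : Fin k → ℕ // ∀ i j, i ≤ j → g j ≤ g i} ×
           {g : Fin l → ℕ // (∀ i j, i ≤ j → g j ≤ g i) ∧ ∀ i, g i ≤ k - l} ×
           {p : Σ m : ℕ, Fin m → ℕ //
              (∀ i j, i ≤ j → p.2 j ≤ p.2 i) ∧ ∀ i, p.2 i ≤ l}) →
          {p : Σ m : ℕ, Fin m → ℕ //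
              (∀ i j, i ≤ j → p.2 j ≤ p.2 i) ∧
              durfeeSide p.2 = k ∧ durfeeSide₂ p.2 = l} :=
    fun x => ⟨⟨k + l + x.2.2.1.1, fwdFun k l x.1.1 x.2.1.1 x.2.2.1.2⟩,
      fwd_mono _ _ _ _ x.1.2 x.2.1.2.1 x.2.1.2.2 x.2.2.2.1 x.2.2.2.2,
      fwd_d1 _ _ _ _ x.2.1.2.2 x.2.2.2.2,
      fwd_d2 _ _ _ _ x.2.1.2.2 x.2.2.2.2⟩
  -- key facts about a partition with given Durfee data
  have key1 : ∀ (m' : ℕ) (f : Fin m' → ℕ), (∀ i j, i ≤ j → f j ≤ f i) →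
      durfeeSide f = k → durfeeSide₂ f = l →
      (k + l ≤ m') ∧ (∀ i : Fin m', i.1 < k → k ≤ f i) ∧
      (∀ i : Fin m', k ≤ i.1 → i.1 < k + l → l ≤ f i ∧ f i ≤ k) ∧
      (∀ i : Fin m', k + l ≤ i.1 → f i ≤ l) := by
    intro m' f hmono hd1 hd2
    obtain ⟨hkm, hsp1, hsp2⟩ := durfee_spec f hmono hd1
    rw [durfeeSide₂_congr f hd1] at hd2
    have hmono' : ∀ i j : Fin (m' - k), i ≤ j →
        f ⟨k + j.1, by have := j.2; omega⟩ ≤ f ⟨k + i.1, by have := i.2; omega⟩ := by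
      intro i j hij
      have hij' : (i : ℕ) ≤ (j : ℕ) := hij
      exact hmono _ _ (Fin.mk_le_mk.mpr (by omega))
    obtain ⟨hlm, hsp1', hsp2'⟩ := durfee_spec _ hmono' hd2
    have hkl : k + l ≤ m' := by omega
    refine ⟨hkl, ?_, ?_, ?_⟩
    · intro i hi
      have hk0 : 0 < k := by omega
      have hp : k - 1 < m' := by omega
      have h2 : k - 1 < f ⟨k - 1, hp⟩ := hsp1 ⟨k - 1, hp⟩ (Nat.sub_lt hk0 Nat.one_pos)
      have h1 : f ⟨k - 1, hp⟩ ≤ f i :=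
        hmono i ⟨k - 1, hp⟩ (Fin.le_def.mpr (show (i : ℕ) ≤ k - 1 by omega))
      omega
    · intro i hk hkl'
      have hl0 : 0 < l := by omega
      constructor
      · have hp : l - 1 < m' - k := by omega
        have h2 : l - 1 < f ⟨k + (l - 1), by omega⟩ :=
          hsp1' ⟨l - 1, hp⟩ (Nat.sub_lt hl0 Nat.one_pos)
        have h1 : f ⟨k + (l - 1), by omega⟩ ≤ f i :=
          hmono i ⟨k + (l - 1), by omega⟩ (Fin.le_def.mpr (show (i : ℕ) ≤ k + (l - 1) by omega))
        omega
      · have hq : k < m' := by omega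
        have h1 : f i ≤ f ⟨k, hq⟩ :=
          hmono ⟨k, hq⟩ i (Fin.le_def.mpr (show k ≤ (i : ℕ) from hk))
        have h2 : f ⟨k, hq⟩ ≤ k := hsp2 ⟨k, hq⟩ (le_refl k)
        omega
    · intro i hi
      have hq : k + l < m' := by have := i.2; omega
      have hp : l < m' - k := by omega
      have h2 : f ⟨k + l, hq⟩ ≤ l := hsp2' ⟨l, hp⟩ (le_refl l)
      have h1 : f i ≤ f ⟨k + l, hq⟩ :=
        hmono ⟨k + l, hq⟩ i (Fin.le_def.mpr (show k + l ≤ (i : ℕ) from hi))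
      omega
  -- the inverse map
  let invF : {p : Σ m : ℕ, Fin m → ℕ //
              (∀ i j, i ≤ j → p.2 j ≤ p.2 i) ∧
              durfeeSide p.2 = k ∧ durfeeSide₂ p.2 = l} →
      ({g : Fin k → ℕ // ∀ i j, i ≤ j → g j ≤ g i} ×
           {g : Fin l → ℕ // (∀ i j, i ≤ j → g j ≤ g i) ∧ ∀ i, g i ≤ k - l} ×
           {p : Σ m : ℕ, Fin m → ℕ //
              (∀ i j, i ≤ j → p.2 j ≤ p.2 i) ∧ ∀ i, p.2 i ≤ l}) :=
    fun p =>
      ⟨⟨fun i => p.1.2 ⟨i.1, by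
          have := i.2
          have := (key1 p.1.1 p.1.2 p.2.1 p.2.2.1 p.2.2.2).1
          omega⟩ - k, by
        intro i j hij
        have hij' : (i : ℕ) ≤ (j : ℕ) := hij
        have := p.2.1 ⟨i.1, by
            have := i.2
            have := (key1 p.1.1 p.1.2 p.2.1 p.2.2.1 p.2.2.2).1
            omega⟩ ⟨j.1, by
            have := j.2
            have := (key1 p.1.1 p.1.2 p.2.1 p.2.2.1 p.2.2.2).1
            omega⟩ (Fin.mk_le_mk.mpr hij')
        dsimp only
        omega⟩,
      ⟨fun j => p.1.2 ⟨k + j.1, by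
          have := j.2
          have := (key1 p.1.1 p.1.2 p.2.1 p.2.2.1 p.2.2.2).1
          omega⟩ - l, by
        constructor
        · intro i j hij
          have hij' : (i : ℕ) ≤ (j : ℕ) := hij
          have hkl := (key1 p.1.1 p.1.2 p.2.1 p.2.2.1 p.2.2.2).1
          have := p.2.1 ⟨k + i.1, by have := i.2; omega⟩ ⟨k + j.1, by have := j.2; omega⟩
            (Fin.mk_le_mk.mpr (by omega))
          dsimp only
          omega
        · intro j
          have hj := j.2
          obtain ⟨hkl, hB, hC, hD⟩ := key1 p.1.1 p.1.2 p.2.1 p.2.2.1 p.2.2.2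
          have := hC ⟨k + j.1, by omega⟩ (by
            show k ≤ k + (j : ℕ); omega) (by
            show k + (j : ℕ) < k + l; omega)
          dsimp only
          omega⟩,
      ⟨⟨p.1.1 - (k + l), fun t => p.1.2 ⟨k + l + t.1, by
          have := t.2
          omega⟩⟩, by
        constructor
        · intro i j hij
          have hij' : (i : ℕ) ≤ (j : ℕ) := hij
          have hi : (i : ℕ) < p.1.1 - (k + l) := i.2
          have hj : (j : ℕ) < p.1.1 - (k + l) := j.2
          exact p.2.1 ⟨k + l + i.1, by omega⟩ ⟨k + l + j.1, by omega⟩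
            (Fin.mk_le_mk.mpr (by omega))
        · intro t
          have ht : (t : ℕ) < p.1.1 - (k + l) := t.2
          obtain ⟨hkl, hB, hC, hD⟩ := key1 p.1.1 p.1.2 p.2.1 p.2.2.1 p.2.2.2
          have := hD ⟨k + l + t.1, by omega⟩ (by
            show k + l ≤ k + l + (t : ℕ); omega)
          dsimp only
          omega⟩⟩
  refine ⟨⟨toF, invF, ?_, ?_⟩, ?_⟩
  · -- left inverse
    rintro ⟨⟨g1, hg1⟩, ⟨g2, hg2⟩, ⟨⟨m, h⟩, hh⟩⟩
    refine Prod.ext (Subtype.ext ?_) (Prod.ext (Subtype.ext ?_) (Subtype.ext ?_))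
    · funext i
      show fwdFun k l g1 g2 h ⟨i.1, by have := i.2; omega⟩ - k = g1 i
      unfold fwdFun
      rw [dif_pos (show (i : ℕ) < k from i.2)]
      simp only [Fin.val_mk, Fin.eta]
      omega
    · funext j
      have hj := j.2
      show fwdFun k l g1 g2 h ⟨k + j.1, by omega⟩ - l = g2 j
      unfold fwdFun
      rw [dif_neg (by simp only [Fin.val_mk]; omega),
        dif_pos (by simp only [Fin.val_mk]; omega)]
      have he : (⟨(⟨k + j.1, by omega⟩ : Fin (k + l + m)).1 - k, by
          simp only [Fin.val_mk]; omega⟩ : Fin l) = j := by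
        apply Fin.ext
        simp only [Fin.val_mk]
        omega
      rw [he]
      omega
    · show (⟨k + l + m - (k + l),
          fun t => fwdFun k l g1 g2 h ⟨k + l + t.1, by have := t.2; omega⟩⟩ :
          Σ n : ℕ, Fin n → ℕ) = ⟨m, h⟩
      apply sigma_fun_ext (by omega)
      intro t
      show fwdFun k l g1 g2 h ⟨k + l + t.1, _⟩ = h _
      unfold fwdFun
      rw [dif_neg (by simp only [Fin.val_mk]; omega),
        dif_neg (by simp only [Fin.val_mk]; omega)]
      congr 1
      apply Fin.ext
      simp only [Fin.val_mk]
      omega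
  · -- right inverse
    rintro ⟨⟨m', f⟩, hmono, hd1, hd2⟩
    dsimp only at hmono hd1 hd2
    obtain ⟨hkl, hB, hC, hD⟩ := key1 m' f hmono hd1 hd2
    apply Subtype.ext
    show (⟨k + l + (m' - (k + l)), _⟩ : Σ n : ℕ, Fin n → ℕ) = ⟨m', f⟩
    apply sigma_fun_ext (by omega)
    intro i
    have hi : (i : ℕ) < k + l + (m' - (k + l)) := i.2
    show fwdFun k l _ _ _ i = f ⟨i.1, _⟩
    unfold fwdFun
    split_ifs with h1 h2
    · have hb := hB ⟨i.1, by omega⟩ h1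
      dsimp only [invF]
      omega
    · have hc := hC ⟨i.1, by omega⟩ (show k ≤ (i : ℕ) by omega)
        (show (i : ℕ) < k + l by omega)
      dsimp only [invF]
      have he : (⟨k + ((i : ℕ) - k), by omega⟩ : Fin m') = ⟨i.1, by omega⟩ := by
        apply Fin.ext; simp only [Fin.val_mk]; omega
      rw [he]
      omega
    · dsimp only [invF]
      have he : (⟨k + l + ((i : ℕ) - (k + l)), by omega⟩ : Fin m') = ⟨i.1, by omega⟩ := by
        apply Fin.ext; simp only [Fin.val_mk]; omega
      rw [he]
  · -- the numerical properties
    rintro ⟨⟨g1, hg1⟩, ⟨g2, hg2⟩, ⟨⟨m, h⟩, hh⟩⟩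
    constructor
    · show (∑ i : Fin (k + l + m), fwdFun k l g1 g2 h i) = _
      rw [Fin.sum_univ_add, Fin.sum_univ_add]
      rw [Finset.sum_congr rfl (fun i _ => fwd_val1 g1 g2 h (m := m) i),
        Finset.sum_congr rfl (fun j _ => fwd_val2 g1 g2 h j),
        Finset.sum_congr rfl (fun t _ => fwd_val3 g1 g2 h t)]
      rw [Finset.sum_add_distrib, Finset.sum_add_distrib]
      simp only [Finset.sum_const, Finset.card_univ, Fintype.card_fin, smul_eq_mul, mul_one]
      ring
    · show k + l + m = k + l + m
      rfl
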